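/- Let G be a finite group that is p-quasi-elementary for a prime p and not cyclic. Then p·1_G is a ℤ-linear combination of the induced characters Ind_H^G 1_H over proper subgroups H < G. -/

import Mathlib

/-- The value at `g` of the character of the permutation representation of `G`
on the coset space `G ⧸ H`, i.e. `Ind_H^G 1_H (g) = |{x ∈ G/H : g • x = x}|`. -/
noncomputable def indTrivChar {G : Type*} [Group G] (H : Subgroup G) (g : G) : ℤ :=
  Nat.card {x : G ⧸ H // g • x = x}

/-- A formal `ℤ`-linear combination of subgroups of `G` is a Brauer relation if
`∑_H n_H Ind_H^G 1_H = 0`. -/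
def IsBrauerRelation {G : Type*} [Group G] (c : Subgroup G →₀ ℤ) : Prop :=
  ∀ g : G, (c.sum fun H n => n * indTrivChar H g) = 0

/-- A group is `p`-quasi-elementary if it has a cyclic normal subgroup of `p`-power index. -/
def IsPQuasiElementary (p : ℕ) (G : Type*) [Group G] : Prop :=
  ∃ C : Subgroup G, C.Normal ∧ IsCyclic C ∧ ∃ k : ℕ, C.index = p ^ k

/-- A group is quasi-elementary if it is `p`-quasi-elementary for some prime `p`. -/
def IsQuasiElementary (G : Type*) [Group G] : Prop :=
  ∃ p : ℕ, p.Prime ∧ IsPQuasiElementary p G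



open Subgroup
open scoped Classical

section Basic
variable {G : Type*} [Group G]

lemma mk_out_eq (H : Subgroup G) (q : G ⧸ H) : QuotientGroup.mk q.out = q :=
  Quotient.out_eq q

lemma smul_mk_eq_iff (H : Subgroup G) (g x : G) :
    g • (QuotientGroup.mk x : G ⧸ H) = QuotientGroup.mk x ↔ x⁻¹ * g * x ∈ H := by
  show QuotientGroup.mk (g * x) = QuotientGroup.mk x ↔ _
  rw [QuotientGroup.eq]
  constructor
  · intro h
    have := H.inv_mem h
    simpa [mul_assoc] using this
  · intro h
    have := H.inv_mem h
    simpa [mul_assoc] using this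

noncomputable def conjSetEquiv (H : Subgroup G) (g : G) :
    {x : G // x⁻¹ * g * x ∈ H} ≃ {q : G ⧸ H // g • q = q} × H where
  toFun x := ⟨⟨QuotientGroup.mk x.1, (smul_mk_eq_iff H g x.1).mpr x.2⟩,
    ⟨(QuotientGroup.mk (s := H) x.1).out⁻¹ * x.1, by
      rw [← QuotientGroup.eq, mk_out_eq]⟩⟩
  invFun qh := ⟨qh.1.1.out * qh.2.1, by
    have h1 : (qh.1.1.out)⁻¹ * g * qh.1.1.out ∈ H := by
      rw [← smul_mk_eq_iff H g, mk_out_eq]; exact qh.1.2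
    have h2 := H.mul_mem (H.mul_mem (H.inv_mem qh.2.2) h1) qh.2.2
    convert h2 using 1
    group⟩
  left_inv x := by
    ext
    simp
  right_inv qh := by
    have h1 : QuotientGroup.mk (s := H) (qh.1.1.out * qh.2.1) = qh.1.1 := by
      conv_rhs => rw [← mk_out_eq H qh.1.1]
      rw [QuotientGroup.eq]
      have : (qh.1.1.out * qh.2.1)⁻¹ * qh.1.1.out = (qh.2.1 : G)⁻¹ := by group
      rw [this]
      exact H.inv_mem qh.2.2
    refine Prod.ext (Subtype.ext ?_) (Subtype.ext ?_)
    · exact h1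
    · show (QuotientGroup.mk (s := H) (qh.1.1.out * qh.2.1)).out⁻¹ * _ = _
      rw [h1, inv_mul_cancel_left]

lemma card_conj_set (H : Subgroup G) (g : G) :
    Nat.card {x : G // x⁻¹ * g * x ∈ H} =
      Nat.card {q : G ⧸ H // g • q = q} * Nat.card H := by
  rw [Nat.card_congr (conjSetEquiv H g), Nat.card_prod]

lemma indTrivChar_mul_card (H : Subgroup G) (g : G) :
    indTrivChar H g * Nat.card H = Nat.card {x : G // x⁻¹ * g * x ∈ H} := by
  rw [card_conj_set]; unfold indTrivChar; push_cast; ring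

/-- Value of the induced trivial character at a normal subgroup. -/
lemma indTrivChar_of_normal {H : Subgroup G} (hH : H.Normal) (g : G) :
    indTrivChar H g = if g ∈ H then (H.index : ℤ) else 0 := by
  unfold indTrivChar
  by_cases hg : g ∈ H
  · rw [if_pos hg]
    have h1 : ∀ q : G ⧸ H, g • q = q := by
      intro q
      induction q using QuotientGroup.induction_on with
      | _ x => exact (smul_mk_eq_iff H g x).mpr (hH.conj_mem' g hg x)
    rw [Nat.card_congr (Equiv.subtypeUnivEquiv h1)]
    rfl
  · rw [if_neg hg]
    have h1 : IsEmpty {q : G ⧸ H // g • q = q} := by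
      constructor
      rintro ⟨q, hq⟩
      induction q using QuotientGroup.induction_on with
      | _ x =>
        rw [smul_mk_eq_iff H g x] at hq
        have h2 := hH.conj_mem _ hq x
        rw [show x * (x⁻¹ * g * x) * x⁻¹ = g by group] at h2
        exact hg h2
    rw [Nat.card_of_isEmpty]
    rfl

end Basic

section Inflate
variable {G : Type*} {G' : Type*} [Group G] [Group G']

lemma indTrivChar_comap (f : G →* G') (hf : Function.Surjective f) (H' : Subgroup G') (g : G) :
    indTrivChar (H'.comap f) g = indTrivChar H' (f g) := by
  unfold indTrivChar
  congr 1
  let φ : G ⧸ (H'.comap f) → G' ⧸ H' := Quotient.map' f (fun a b hab => by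
    rw [QuotientGroup.leftRel_apply] at hab ⊢
    have : f (a⁻¹ * b) ∈ H' := hab
    simpa using this)
  have hφmk : ∀ x : G, φ (QuotientGroup.mk x) = QuotientGroup.mk (f x) := fun _ => rfl
  have hbij : Function.Bijective φ := by
    constructor
    · intro a b hab
      induction a using QuotientGroup.induction_on with
      | _ x =>
        induction b using QuotientGroup.induction_on with
        | _ y =>
          rw [hφmk, hφmk, QuotientGroup.eq] at hab
          rw [QuotientGroup.eq]
          show f (x⁻¹ * y) ∈ H'
          simpa using hab
    · intro q'
      induction q' using QuotientGroup.induction_on with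
      | _ y =>
        obtain ⟨x, rfl⟩ := hf y
        exact ⟨QuotientGroup.mk x, rfl⟩
  have hequiv : ∀ q, φ (g • q) = f g • φ q := by
    intro q
    induction q using QuotientGroup.induction_on with
    | _ x =>
      show φ (QuotientGroup.mk (g * x)) = f g • QuotientGroup.mk (f x)
      rw [hφmk]
      show QuotientGroup.mk (f (g * x)) = QuotientGroup.mk (f g * f x)
      rw [map_mul]
  exact Nat.card_congr ((Equiv.ofBijective φ hbij).subtypeEquiv (fun q => by
    constructor
    · intro h
      show f g • φ q = φ q
      rw [← hequiv, h]
    · intro h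
      apply hbij.1
      rw [hequiv]
      exact h))

lemma relation_comap (f : G →* G') (hf : Function.Surjective f) (p : ℕ)
    (h : ∃ c : Subgroup G' →₀ ℤ,
      (∀ H ∈ c.support, H ≠ ⊤) ∧
      ∀ g : G', (c.sum fun H n => n * indTrivChar H g) = (p : ℤ)) :
    ∃ c : Subgroup G →₀ ℤ,
      (∀ H ∈ c.support, H ≠ ⊤) ∧
      ∀ g : G, (c.sum fun H n => n * indTrivChar H g) = (p : ℤ) := by
  obtain ⟨c', hsup, hsum⟩ := h
  refine ⟨c'.mapDomain (Subgroup.comap f), ?_, ?_⟩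
  · intro H hH
    have := Finsupp.mapDomain_support hH
    rw [Finset.mem_image] at this
    obtain ⟨H', hH', rfl⟩ := this
    intro htop
    apply hsup H' hH'
    rw [eq_top_iff]
    intro y _
    obtain ⟨x, rfl⟩ := hf y
    have : x ∈ Subgroup.comap f H' := htop ▸ Subgroup.mem_top x
    exact this
  · intro g
    rw [Finsupp.sum_mapDomain_index (by intro b; ring) (by intro b m₁ m₂; ring)]
    rw [← hsum (f g)]
    apply Finsupp.sum_congr
    intro H' _
    rw [indTrivChar_comap f hf]

/-- quotient of p-quasi-elementary is p-quasi-elementary -/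
lemma isPQE_quotient (p : ℕ) (hp : p.Prime) (hqe : IsPQuasiElementary p G)
    (K : Subgroup G) [K.Normal] : IsPQuasiElementary p (G ⧸ K) := by
  obtain ⟨C, hCn, hCc, k, hCi⟩ := hqe
  refine ⟨C.map (QuotientGroup.mk' K), hCn.map _ (QuotientGroup.mk'_surjective K), ?_, ?_⟩
  · exact isCyclic_of_surjective _ ((QuotientGroup.mk' K).subgroupMap_surjective C)
  · have hdvd := Subgroup.index_map_dvd C (QuotientGroup.mk'_surjective K)
    rw [hCi] at hdvd
    obtain ⟨j, _, hj⟩ := (Nat.dvd_prime_pow hp).mp hdvd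
    exact ⟨j, hj⟩

end Inflate

section Helpers
variable {G : Type*} [Group G]

lemma subgroup_eq_of_le_of_card_le [Finite G] {H K : Subgroup G} (h : H ≤ K)
    (hc : Nat.card K ≤ Nat.card H) : H = K := by
  apply SetLike.coe_injective
  apply Set.eq_of_subset_of_ncard_le h
  rwa [← Nat.card_coe_set_eq, ← Nat.card_coe_set_eq]

end Helpers

section B1

lemma relation_of_card_p_sq {Q : Type*} [Group Q] [Finite Q] (p : ℕ) (hp : p.Prime)
    (hcomm : ∀ a b : Q, a * b = b * a) (hcard : Nat.card Q = p ^ 2)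
    (hord : ∀ x : Q, x ≠ 1 → orderOf x = p) :
    ∃ c : Subgroup Q →₀ ℤ, (∀ H ∈ c.support, H ≠ ⊤) ∧
      ∀ g : Q, (c.sum fun H n => n * indTrivChar H g) = (p : ℤ) := by
  classical
  have hfQ : Fintype Q := Fintype.ofFinite Q
  have hfS : Fintype (Subgroup Q) := Fintype.ofFinite _
  have hp1 : 1 < p := hp.one_lt
  have hnormal : ∀ H : Subgroup Q, H.Normal := by
    intro H
    constructor
    intro n hn g
    have he : g * n * g⁻¹ = n := by
      rw [hcomm g n, mul_assoc, mul_inv_cancel, mul_one]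
    rw [he]
    exact hn
  have hnt : Nontrivial Q := by
    rw [← Finite.one_lt_card_iff_nontrivial, hcard]
    calc 1 < 2 ^ 2 := by norm_num
      _ ≤ p ^ 2 := Nat.pow_le_pow_left hp.two_le 2
  set L : Finset (Subgroup Q) := Finset.univ.filter (fun H => Nat.card H = p) with hLdef
  -- unique line through each nontrivial element
  have hline : ∀ g : Q, g ≠ 1 → L.filter (fun H => g ∈ H) = {Subgroup.zpowers g} := by
    intro g hg
    have hzp : Nat.card (Subgroup.zpowers g) = p := by
      rw [Nat.card_zpowers, hord g hg]
    ext H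
    simp only [Finset.mem_filter, Finset.mem_singleton, hLdef, Finset.mem_univ, true_and]
    constructor
    · rintro ⟨hHp, hgH⟩
      have hle : Subgroup.zpowers g ≤ H := (Subgroup.zpowers_le).mpr hgH
      exact (subgroup_eq_of_le_of_card_le hle (by rw [hHp, hzp])).symm
    · rintro rfl
      exact ⟨hzp, Subgroup.mem_zpowers g⟩
  -- count the lines
  have hLcard : L.card = p + 1 := by
    have hcover : ∀ x ∈ Finset.univ.erase (1 : Q), Subgroup.zpowers x ∈ L := by
      intro x hx
      rw [Finset.mem_erase] at hx
      simp only [hLdef, Finset.mem_filter, Finset.mem_univ, true_and]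
      rw [Nat.card_zpowers, hord x hx.1]
    have hsum := Finset.card_eq_sum_card_fiberwise hcover
    have hfiber : ∀ H ∈ L, ((Finset.univ.erase (1 : Q)).filter
        (fun x => Subgroup.zpowers x = H)).card = p - 1 := by
      intro H hH
      have hHp : Nat.card H = p := by
        simpa [hLdef] using hH
      have : (Finset.univ.erase (1 : Q)).filter (fun x => Subgroup.zpowers x = H)
          = (H : Set Q).toFinset.erase 1 := by
        ext x
        simp only [Finset.mem_filter, Finset.mem_erase, Finset.mem_univ, true_and,
          Set.mem_toFinset, SetLike.mem_coe, and_true]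
        constructor
        · rintro ⟨hx1, rfl⟩
          exact ⟨hx1, Subgroup.mem_zpowers x⟩
        · rintro ⟨hx1, hxH⟩
          refine ⟨hx1, ?_⟩
          apply subgroup_eq_of_le_of_card_le ((Subgroup.zpowers_le).mpr hxH)
          rw [hHp, Nat.card_zpowers, hord x hx1]
      rw [this, Finset.card_erase_of_mem (by simp [H.one_mem]), Set.toFinset_card]
      have hcc : Fintype.card ((H : Set Q) : Type _) = Nat.card H := by
        rw [← Nat.card_eq_fintype_card]
        rfl
      rw [hcc, hHp]
    rw [Finset.sum_congr rfl hfiber, Finset.sum_const, smul_eq_mul,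
      Finset.card_erase_of_mem (Finset.mem_univ 1), Finset.card_univ,
      ← Nat.card_eq_fintype_card, hcard] at hsum
    have hpm : 0 < p - 1 := by omega
    apply Nat.eq_of_mul_eq_mul_right hpm
    rw [← hsum]
    have h2 : 1 ≤ p ^ 2 := Nat.one_le_pow _ _ (by omega)
    zify [h2, hp1.le]
    ring
  -- the relation
  set σ : Subgroup Q → ℤ := fun H =>
    (if H = ⊥ then (-1 : ℤ) else 0) + (if Nat.card H = p then 1 else 0) with hσdef
  refine ⟨Finsupp.equivFunOnFinite.symm σ, ?_, ?_⟩
  · intro H hH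
    have hne : σ H ≠ 0 := by
      rw [Finsupp.mem_support_iff] at hH
      exact hH
    rintro rfl
    apply hne
    have hct : Nat.card (⊤ : Subgroup Q) = Nat.card Q :=
      Nat.card_congr Subgroup.topEquiv.toEquiv
    have h1 : (⊤ : Subgroup Q) ≠ ⊥ := by
      intro h
      obtain ⟨x, hx⟩ := exists_ne (1 : Q)
      exact hx (by simpa using (h ▸ Subgroup.mem_top x : x ∈ (⊥ : Subgroup Q)))
    have h2 : Nat.card (⊤ : Subgroup Q) ≠ p := by
      rw [hct, hcard]
      nlinarith
    show σ ⊤ = 0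
    rw [hσdef]
    simp only [if_neg h1, if_neg h2]
    ring
  · intro g
    have hsum0 : (Finsupp.equivFunOnFinite.symm σ).sum (fun H n => n * indTrivChar H g)
        = ∑ H : Subgroup Q, σ H * indTrivChar H g := by
      apply Finsupp.sum_fintype
      intro i
      ring
    rw [hsum0]
    have hsplit : ∀ H : Subgroup Q, σ H * indTrivChar H g =
        (if H = ⊥ then -(indTrivChar H g) else 0) +
        (if Nat.card H = p then indTrivChar H g else 0) := by
      intro H
      show ((if H = ⊥ then (-1 : ℤ) else 0) + (if Nat.card H = p then 1 else 0))
          * indTrivChar H g = _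
      split_ifs <;> ring
    rw [Finset.sum_congr rfl (fun H _ => hsplit H), Finset.sum_add_distrib]
    have hfirst : (∑ H : Subgroup Q, if H = ⊥ then -(indTrivChar H g) else 0)
        = -(indTrivChar (⊥ : Subgroup Q) g) := by
      rw [Finset.sum_ite_eq' Finset.univ (⊥ : Subgroup Q) (fun H => -(indTrivChar H g))]
      simp
    have hsecond : (∑ H : Subgroup Q, if Nat.card H = p then indTrivChar H g else 0)
        = ∑ H ∈ L, indTrivChar H g := by
      rw [hLdef, Finset.sum_filter]
    rw [hfirst, hsecond]
    -- values
    have hbot : indTrivChar (⊥ : Subgroup Q) g = if g = 1 then ((p : ℤ))^2 else 0 := by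
      rw [indTrivChar_of_normal (hnormal ⊥)]
      simp only [Subgroup.mem_bot, Subgroup.index_bot, hcard]
      split_ifs <;> push_cast <;> ring
    have hindex : ∀ H ∈ L, H.index = p := by
      intro H hH
      have hHp : Nat.card H = p := by simpa [hLdef] using hH
      have := Subgroup.card_mul_index H
      rw [hHp, hcard] at this
      have hp0 : p ≠ 0 := by omega
      have : p * H.index = p * p := by rw [this]; ring
      exact Nat.eq_of_mul_eq_mul_left (by omega) this
    have hval : ∀ H ∈ L, indTrivChar H g = if g ∈ H then (p : ℤ) else 0 := by
      intro H hH
      rw [indTrivChar_of_normal (hnormal H), hindex H hH]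
    rw [Finset.sum_congr rfl hval, hbot]
    by_cases hg : g = 1
    · rw [if_pos hg]
      subst hg
      have h3 : ∀ H ∈ L, (if (1 : Q) ∈ H then (p : ℤ) else 0) = (p : ℤ) := by
        intro H _
        rw [if_pos H.one_mem]
      rw [Finset.sum_congr rfl h3, Finset.sum_const, hLcard]
      push_cast
      ring
    · rw [if_neg hg, ← Finset.sum_filter, hline g hg, Finset.sum_singleton]
      ring
end B1

section B2
open scoped Pointwise

variable {G : Type*} [Group G]

lemma zpow_helper1 (x : G) (n : ℕ) (j : ℤ) : (x ^ n) ^ j = x ^ ((n : ℤ) * j) := by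
  rw [← zpow_natCast x n, ← zpow_mul]

lemma zpow_helper2 (x : G) (j : ℤ) (k : ℕ) : (x ^ j) ^ k = x ^ (j * (k : ℤ)) := by
  rw [← zpow_natCast (x ^ j) k, ← zpow_mul]

lemma int_pow_dvd {p r : ℕ} (hp : 0 < p) (hr : 1 ≤ r) {j : ℤ}
    (h : ((p : ℤ)) ^ r ∣ j * ((p : ℤ)) ^ (r - 1)) : (p : ℤ) ∣ j := by
  have h2 : ((p : ℤ)) ^ r = (p : ℤ) * (p : ℤ) ^ (r - 1) := by
    rw [← pow_succ', Nat.sub_add_cancel hr]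
  rw [h2] at h
  have h3 : ((p : ℤ)) ^ (r - 1) ≠ 0 := by positivity
  exact (mul_dvd_mul_iff_right h3).mp h

lemma relation_B2 [Finite G] (p : ℕ) (hp : p.Prime)
    (A : Subgroup G) (hAn : A.Normal) (a : G) (hAz : A = Subgroup.zpowers a)
    (m : ℕ) (hm1 : 1 < m) (hpm : ¬ p ∣ m) (hcardA : Nat.card A = m)
    (r : ℕ) (hr : 1 ≤ r) (hGbar : Nat.card (G ⧸ A) = p ^ r)
    (hGbarCyc : IsCyclic (G ⧸ A))
    (hquot : ∀ (K : Subgroup G) [K.Normal], K ≠ ⊥ → IsCyclic (G ⧸ K)) :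
    IsCyclic G ∨ ∃ c : Subgroup G →₀ ℤ, (∀ H ∈ c.support, H ≠ ⊤) ∧
      ∀ g : G, (c.sum fun H n => n * indTrivChar H g) = (p : ℤ) := by
  classical
  haveI := hAn
  haveI := Fact.mk hp
  set π := QuotientGroup.mk' A with hπdef
  have hπsur : Function.Surjective π := QuotientGroup.mk'_surjective A
  have hkerπ : ∀ x : G, π x = 1 ↔ x ∈ A := by
    intro x
    exact QuotientGroup.eq_one_iff x
  have hm0 : m ≠ 0 := by omega
  have hcardG : Nat.card G = m * p ^ r := by
    rw [← Subgroup.card_mul_index A, hcardA, Subgroup.index_eq_card, hGbar]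
  have hppn : p * p ^ (r - 1) = p ^ r := by
    rw [← pow_succ', Nat.sub_add_cancel hr]
  -- the Sylow subgroup
  obtain ⟨P⟩ : Nonempty (Sylow p G) := inferInstance
  have hcardP : Nat.card (P : Subgroup G) = p ^ r := by
    rw [Sylow.card_eq_multiplicity, hcardG]
    congr 1
    rw [Nat.factorization_mul hm0 (pow_ne_zero r hp.pos.ne'), Finsupp.add_apply,
      Nat.factorization_eq_zero_of_not_dvd hpm, hp.factorization_pow, zero_add,
      Finsupp.single_eq_same]
  have hexpA : ∀ x ∈ A, x ^ m = 1 := by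
    intro x hx
    have h1 : orderOf (⟨x, hx⟩ : A) ∣ Nat.card A := orderOf_dvd_natCard _
    rw [hcardA, ← Subgroup.orderOf_coe] at h1
    exact orderOf_dvd_iff_pow_eq_one.mp h1
  have hAPbot : ∀ x, x ∈ A → x ∈ (P : Subgroup G) → x = 1 := by
    intro x hxA hxP
    have h1 : orderOf x ∣ m := orderOf_dvd_of_pow_eq_one (hexpA x hxA)
    have h2 : orderOf x ∣ p ^ r := by
      have := orderOf_dvd_natCard (⟨x, hxP⟩ : (P : Subgroup G))
      rwa [hcardP, ← Subgroup.orderOf_coe] at this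
    have hcop : Nat.Coprime m (p ^ r) :=
      Nat.Coprime.pow_right r ((Nat.Prime.coprime_iff_not_dvd hp).mpr hpm).symm
    have h3 : orderOf x ∣ 1 := by
      rw [← hcop]
      exact Nat.dvd_gcd h1 h2
    rw [← orderOf_eq_one_iff]
    exact Nat.dvd_one.mp h3
  -- P maps isomorphically onto G/A
  set f := π.comp (P : Subgroup G).subtype with hfdef
  have hfinj : Function.Injective f := by
    rw [injective_iff_map_eq_one]
    intro q hq
    have : (q : G) ∈ A := (hkerπ q).mp hq
    exact Subtype.ext (hAPbot q this q.2)
  have hfsur : Function.Surjective f := by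
    rw [← MonoidHom.range_eq_top]
    apply Subgroup.eq_top_of_card_eq
    have e1 : (f.range : Set (G ⧸ A)) = Set.range f := f.coe_range
    calc Nat.card f.range = Nat.card (Set.range f) := Nat.card_congr (Equiv.setCongr e1)
      _ = Nat.card (P : Subgroup G) := Nat.card_congr (Equiv.ofInjective f hfinj).symm
      _ = Nat.card (G ⧸ A) := by rw [hcardP, hGbar]
  haveI hPcyc : IsCyclic (P : Subgroup G) :=
    isCyclic_of_surjective (MulEquiv.ofBijective f ⟨hfinj, hfsur⟩).symm
      (MulEquiv.ofBijective f ⟨hfinj, hfsur⟩).symm.surjective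
  obtain ⟨sg, hsg⟩ := IsCyclic.exists_generator (α := (P : Subgroup G))
  set s := (sg : G) with hsdef
  have hsP : s ∈ (P : Subgroup G) := sg.2
  have hords : orderOf s = p ^ r := by
    rw [hsdef, Subgroup.orderOf_coe, orderOf_eq_card_of_forall_mem_zpowers hsg, hcardP]
  have hπs_ord : orderOf (π s) = p ^ r := by
    have h1 := orderOf_injective f hfinj sg
    have h2 : f sg = π s := rfl
    rw [h2] at h1
    rw [h1, ← hords, hsdef, Subgroup.orderOf_coe]
  have hπstop : ∀ y : G ⧸ A, ∃ j : ℤ, (π s) ^ j = y := by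
    intro y
    have h1 : Subgroup.zpowers (π s) = ⊤ :=
      Subgroup.eq_top_of_card_eq _ (by rw [Nat.card_zpowers, hπs_ord, hGbar])
    exact Subgroup.mem_zpowers_iff.mp (h1 ▸ Subgroup.mem_top y)
  have hπsr : (π s) ^ (p ^ r) = 1 := by rw [← hπs_ord, pow_orderOf_eq_one]
  -- membership criterion for Nbar := zpowers ((π s)^p)
  have hN2 : ∀ y : G ⧸ A, y ∈ Subgroup.zpowers ((π s) ^ p) ↔ y ^ (p ^ (r - 1)) = 1 := by
    intro y
    constructor
    · intro hy
      obtain ⟨j, rfl⟩ := Subgroup.mem_zpowers_iff.mp hy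
      rw [zpow_helper1, zpow_helper2]
      have he : (p : ℤ) * j * ((p ^ (r - 1) : ℕ) : ℤ) = ((p ^ r : ℕ) : ℤ) * j := by
        push_cast [← hppn]
        ring
      rw [he, zpow_mul, zpow_natCast, hπsr, one_zpow]
    · intro hy
      obtain ⟨j, rfl⟩ := hπstop y
      rw [zpow_helper2] at hy
      have hdvd : ((orderOf (π s) : ℕ) : ℤ) ∣ j * ((p ^ (r - 1) : ℕ) : ℤ) :=
        orderOf_dvd_iff_zpow_eq_one.mpr hy
      rw [hπs_ord] at hdvd
      push_cast at hdvd
      obtain ⟨j', rfl⟩ := int_pow_dvd hp.pos hr hdvd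
      refine Subgroup.mem_zpowers_iff.mpr ⟨j', ?_⟩
      rw [zpow_helper1]
  -- commutativity of the quotient
  have hcommQ : ∀ x y : G ⧸ A, x * y = y * x := by
    intro x y
    obtain ⟨j, rfl⟩ := hπstop x
    obtain ⟨k, rfl⟩ := hπstop y
    exact ((Commute.refl (π s)).zpow_zpow j k).eq
  have hNbn : (Subgroup.zpowers ((π s) ^ p)).Normal := by
    constructor
    intro n hn g
    have he : g * n * g⁻¹ = n := by
      rw [hcommQ g n, mul_assoc, mul_inv_cancel, mul_one]
    rw [he]
    exact hn
  set N := (Subgroup.zpowers ((π s) ^ p)).comap π with hNdef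
  haveI hNn : N.Normal := hNbn.comap π
  have hNmem : ∀ g : G, g ∈ N ↔ (π g) ^ (p ^ (r - 1)) = 1 := by
    intro g
    rw [hNdef, Subgroup.mem_comap]
    exact hN2 (π g)
  have hcardNb : Nat.card (Subgroup.zpowers ((π s) ^ p)) = p ^ (r - 1) := by
    rw [Nat.card_zpowers, orderOf_pow, hπs_ord]
    have hgcd : Nat.gcd (p ^ r) p = p := by
      rw [Nat.gcd_comm]
      exact Nat.gcd_eq_left (dvd_pow_self p (by omega))
    rw [hgcd, ← hppn, Nat.mul_div_cancel_left _ hp.pos]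
  have hNidx : N.index = p := by
    rw [hNdef, Subgroup.index_comap_of_surjective _ hπsur]
    have h1 := Subgroup.card_mul_index (Subgroup.zpowers ((π s) ^ p))
    rw [hcardNb, Subgroup.index_eq_card, hGbar, ← hppn, mul_comm p _] at h1
    exact Nat.eq_of_mul_eq_mul_left (Nat.pow_pos hp.pos) h1
  -- P1
  set P₁ := Subgroup.zpowers (s ^ p) with hP1def
  have hcardP1 : Nat.card P₁ = p ^ (r - 1) := by
    rw [hP1def, Nat.card_zpowers, orderOf_pow, hords]
    have hgcd : Nat.gcd (p ^ r) p = p := by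
      rw [Nat.gcd_comm]
      exact Nat.gcd_eq_left (dvd_pow_self p (by omega))
    rw [hgcd, ← hppn, Nat.mul_div_cancel_left _ hp.pos]
  have hP1P : P₁ ≤ (P : Subgroup G) :=
    Subgroup.zpowers_le.mpr ((P : Subgroup G).pow_mem hsP p)
  have hP1N : P₁ ≤ N := by
    apply Subgroup.zpowers_le.mpr
    rw [hNmem]
    rw [map_pow, ← pow_mul, hppn, ← hπs_ord, pow_orderOf_eq_one]
  have hNPle : ∀ x : G, x ∈ N → x ∈ (P : Subgroup G) → x ∈ P₁ := by
    intro x hxN hxP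
    obtain ⟨j, hj⟩ := Subgroup.mem_zpowers_iff.mp (hsg ⟨x, hxP⟩)
    have hxs : s ^ j = x := by
      have h1 := congrArg (fun z : (P : Subgroup G) => (z : G)) hj
      push_cast at h1
      rw [hsdef]
      exact h1
    rw [hNmem, ← hxs, map_zpow, zpow_helper2] at hxN
    have hdvd : ((orderOf (π s) : ℕ) : ℤ) ∣ j * ((p ^ (r - 1) : ℕ) : ℤ) :=
      orderOf_dvd_iff_zpow_eq_one.mpr hxN
    rw [hπs_ord] at hdvd
    push_cast at hdvd
    obtain ⟨j', rfl⟩ := int_pow_dvd hp.pos hr hdvd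
    rw [← hxs, hP1def]
    exact Subgroup.mem_zpowers_iff.mpr ⟨j', by rw [zpow_helper1]⟩
  -- decomposition of elements
  have decomp : ∀ g : G, ∃ b ∈ A, ∃ j : ℤ, g = b * s ^ j := by
    intro g
    obtain ⟨j, hj⟩ := hπstop (π g)
    have h1 : π (g * (s ^ j)⁻¹) = 1 := by
      rw [map_mul, map_inv, map_zpow, hj, mul_inv_cancel]
    refine ⟨g * (s ^ j)⁻¹, (hkerπ _).mp h1, j, by group⟩
  -- the centralizer intersection Z
  set Z := A ⊓ Subgroup.centralizer ((P : Subgroup G) : Set G) with hZdef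
  have hZmem : ∀ z, z ∈ Z ↔ z ∈ A ∧ ∀ q ∈ (P : Subgroup G), q * z = z * q := by
    intro z
    rw [hZdef, Subgroup.mem_inf, Subgroup.mem_centralizer_iff]
    constructor
    · rintro ⟨h1, h2⟩
      exact ⟨h1, fun q hq => h2 q hq⟩
    · rintro ⟨h1, h2⟩
      exact ⟨h1, fun q hq => h2 q hq⟩
  have hAcomm : ∀ x y : G, x ∈ A → y ∈ A → x * y = y * x := by
    intro x y hx hy
    obtain ⟨k, rfl⟩ := Subgroup.mem_zpowers_iff.mp (hAz ▸ hx)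
    obtain ⟨l, rfl⟩ := Subgroup.mem_zpowers_iff.mp (hAz ▸ hy)
    exact ((Commute.refl a).zpow_zpow k l).eq
  haveI hZn : Z.Normal := by
    constructor
    intro z hz g
    obtain ⟨hzA, hzC⟩ := (hZmem z).mp hz
    obtain ⟨b, hbA, j, rfl⟩ := decomp g
    have hc1 : s ^ j * z * (s ^ j)⁻¹ = z := by
      rw [hzC (s ^ j) (Subgroup.zpow_mem _ hsP j), mul_assoc, mul_inv_cancel, mul_one]
    have hc2 : b * z * b⁻¹ = z := by
      rw [hAcomm b z hbA hzA, mul_assoc, mul_inv_cancel, mul_one]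
    have he : b * s ^ j * z * (b * s ^ j)⁻¹ = z := by
      have : b * s ^ j * z * (b * s ^ j)⁻¹ = b * (s ^ j * z * (s ^ j)⁻¹) * b⁻¹ := by
        group
      rw [this, hc1, hc2]
    rw [he]
    exact hz
  have hZc : Z ≤ Subgroup.center G := by
    intro z hz
    rw [Subgroup.mem_center_iff]
    intro g
    obtain ⟨hzA, hzC⟩ := (hZmem z).mp hz
    obtain ⟨b, hbA, j, rfl⟩ := decomp g
    rw [mul_assoc, hzC (s ^ j) (Subgroup.zpow_mem _ hsP j), ← mul_assoc,
      hAcomm b z hbA hzA, mul_assoc]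
  by_cases hZbot : Z = ⊥
  · right
    have hZbot' : ∀ z, z ∈ A → (∀ q ∈ (P : Subgroup G), q * z = z * q) → z = 1 := by
      intro z h1 h2
      have h3 : z ∈ Z := (hZmem z).mpr ⟨h1, h2⟩
      rw [hZbot] at h3
      exact Subgroup.mem_bot.mp h3
    -- normalizer of P equals P
    have hnormP : ∀ n : G, n ∈ Subgroup.normalizer ((P : Subgroup G) : Set G) → n ∈ (P : Subgroup G) := by
      intro n hn
      obtain ⟨b, hbA, j, rfl⟩ := decomp n
      have hsjn : s ^ j ∈ Subgroup.normalizer ((P : Subgroup G) : Set G) :=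
        Subgroup.le_normalizer (Subgroup.zpow_mem _ hsP j)
      have hbn : b ∈ Subgroup.normalizer ((P : Subgroup G) : Set G) := by
        have he : b = b * s ^ j * (s ^ j)⁻¹ := by group
        rw [he]
        exact Subgroup.mul_mem _ hn (Subgroup.inv_mem _ hsjn)
      have hbc : ∀ q ∈ (P : Subgroup G), q * b = b * q := by
        intro q hq
        have hk : b * q * b⁻¹ ∈ (P : Subgroup G) :=
          ((Subgroup.mem_normalizer_iff.mp hbn q).mp hq)
        have hkP : b * q * b⁻¹ * q⁻¹ ∈ (P : Subgroup G) :=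
          Subgroup.mul_mem _ hk (Subgroup.inv_mem _ hq)
        have hkA : b * q * b⁻¹ * q⁻¹ ∈ A := by
          have h5 : q * b⁻¹ * q⁻¹ ∈ A := hAn.conj_mem b⁻¹ (A.inv_mem hbA) q
          have h7 : b * q * b⁻¹ * q⁻¹ = b * (q * b⁻¹ * q⁻¹) := by group
          rw [h7]
          exact A.mul_mem hbA h5
        have h8 : b * q * b⁻¹ * q⁻¹ = 1 := hAPbot _ hkA hkP
        have h9 : b * q = (b * q * b⁻¹ * q⁻¹) * (q * b) := by group
        rw [h8, one_mul] at h9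
        exact h9.symm
      have hb1 : b = 1 := hZbot' b hbA hbc
      rw [hb1, one_mul]
      exact Subgroup.zpow_mem _ hsP j
    -- the three subgroups are proper
    have hNneTop : N ≠ ⊤ := by
      intro h
      rw [h, Subgroup.index_top] at hNidx
      have := hp.one_lt
      omega
    have hcardTop : Nat.card ((⊤ : Subgroup G)) = Nat.card G :=
      Nat.card_congr Subgroup.topEquiv.toEquiv
    have hprpos : 0 < p ^ r := Nat.pow_pos hp.pos
    have hPneTop : (P : Subgroup G) ≠ ⊤ := by
      intro h
      rw [h, hcardTop, hcardG] at hcardP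
      have h2 : 2 * p ^ r ≤ m * p ^ r := Nat.mul_le_mul_right _ (by omega)
      linarith
    have hP1neTop : P₁ ≠ ⊤ := by
      intro h
      rw [h, hcardTop, hcardG] at hcardP1
      have h1 : p ^ (r - 1) < p ^ r := Nat.pow_lt_pow_right hp.one_lt (by omega)
      have h2 : p ^ r ≤ m * p ^ r := Nat.le_mul_of_pos_left _ (by omega)
      linarith
    refine ⟨Finsupp.single N 1 + Finsupp.single (P : Subgroup G) (p : ℤ)
      + Finsupp.single P₁ (-1), ?_, ?_⟩
    · intro H hH
      have h1 := Finsupp.support_add hH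
      rw [Finset.mem_union] at h1
      rcases h1 with h1 | h1
      · have h2 := Finsupp.support_add h1
        rw [Finset.mem_union] at h2
        rcases h2 with h2 | h2
        · rw [Finset.mem_singleton.mp (Finsupp.support_single_subset h2)]
          exact hNneTop
        · rw [Finset.mem_singleton.mp (Finsupp.support_single_subset h2)]
          exact hPneTop
      · rw [Finset.mem_singleton.mp (Finsupp.support_single_subset h1)]
        exact hP1neTop
    · intro g
      have hz0 : ∀ H : Subgroup G, (0 : ℤ) * indTrivChar H g = 0 := fun H => by ring
      have hadd : ∀ (H : Subgroup G) (b₁ b₂ : ℤ),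
          (b₁ + b₂) * indTrivChar H g = b₁ * indTrivChar H g + b₂ * indTrivChar H g :=
        fun H b₁ b₂ => by ring
      rw [Finsupp.sum_add_index' hz0 hadd, Finsupp.sum_add_index' hz0 hadd,
        Finsupp.sum_single_index (hz0 _), Finsupp.sum_single_index (hz0 _),
        Finsupp.sum_single_index (hz0 _)]
      have hNval : indTrivChar N g = if g ∈ N then (p : ℤ) else 0 := by
        rw [indTrivChar_of_normal hNn, hNidx]
      have hppz : ((p : ℤ)) ^ r = (p : ℤ) * ((p : ℤ)) ^ (r - 1) := by
        exact_mod_cast hppn.symm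
      have hpr1ne : (((p : ℤ)) ^ (r - 1)) ≠ 0 := by
        have := hp.pos
        positivity
      by_cases hgN : g ∈ N
      · -- g ∈ N : the P and P₁ characters are proportional
        have hiff : ∀ x : G, x⁻¹ * g * x ∈ (P : Subgroup G) ↔ x⁻¹ * g * x ∈ P₁ := by
          intro x
          constructor
          · intro h
            apply hNPle _ _ h
            have h5 := hNn.conj_mem g hgN x⁻¹
            simpa using h5
          · exact fun h => hP1P h
        have hPP1 : indTrivChar P₁ g = (p : ℤ) * indTrivChar (P : Subgroup G) g := by
          have e1 := indTrivChar_mul_card (P : Subgroup G) g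
          have e2 := indTrivChar_mul_card P₁ g
          have e3 : Nat.card {x : G // x⁻¹ * g * x ∈ (P : Subgroup G)}
              = Nat.card {x : G // x⁻¹ * g * x ∈ P₁} :=
            Nat.card_congr (Equiv.subtypeEquivRight hiff)
          rw [hcardP] at e1
          rw [hcardP1] at e2
          apply mul_right_cancel₀ hpr1ne
          push_cast at e1 e2 ⊢
          rw [e2, ← e3, ← e1, hppz]
          ring
        rw [hNval, if_pos hgN, hPP1]
        ring
      · -- g ∉ N : main case
        have hordπg : orderOf (π g) = p ^ r := by
          have hdvd : orderOf (π g) ∣ p ^ r := by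
            have h5 := orderOf_dvd_natCard (π g)
            rwa [hGbar] at h5
          obtain ⟨i, hile, hi⟩ := (Nat.dvd_prime_pow hp).mp hdvd
          have hi2 : ¬ orderOf (π g) ∣ p ^ (r - 1) := fun h =>
            hgN ((hNmem g).mpr (orderOf_dvd_iff_pow_eq_one.mp h))
          have hir : i = r := by
            by_contra hir
            apply hi2
            rw [hi]
            exact pow_dvd_pow p (by omega)
          rw [hi, hir]
        have hdvd2 : p ^ r ∣ orderOf g := by
          rw [← hordπg]
          apply orderOf_dvd_of_pow_eq_one
          rw [← map_pow, pow_orderOf_eq_one, map_one]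
        set t := orderOf g / p ^ r with htdef
        have hts : orderOf g = p ^ r * t := (Nat.mul_div_cancel' hdvd2).symm
        have hpt : ¬ p ∣ t := by
          intro hct
          apply hpm
          have h1 : orderOf g ∣ Nat.card G := orderOf_dvd_natCard g
          rw [hcardG, hts, mul_comm m _] at h1
          have h2 : t ∣ m := (Nat.mul_dvd_mul_iff_left hprpos).mp h1
          exact dvd_trans hct h2
        have hcop : Nat.Coprime (p ^ r) t :=
          Nat.Coprime.pow_left r ((Nat.Prime.coprime_iff_not_dvd hp).mpr hpt)
        obtain ⟨α, β, hαβ⟩ := Nat.isCoprime_iff_coprime.mpr hcop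
        set u := g ^ (α * ((p ^ r : ℕ) : ℤ)) with hudef
        set w := g ^ (β * ((t : ℕ) : ℤ)) with hwdef
        have huw : u * w = g := by
          rw [hudef, hwdef, ← zpow_add, hαβ, zpow_one]
        have hw1 : w ^ (p ^ r) = 1 := by
          rw [hwdef, zpow_helper2]
          have he : β * ((t : ℕ) : ℤ) * ((p ^ r : ℕ) : ℤ) = ((orderOf g : ℕ) : ℤ) * β := by
            rw [hts]
            push_cast
            ring
          rw [he, zpow_mul, zpow_natCast, pow_orderOf_eq_one, one_zpow]
        have huA : u ∈ A := by
          rw [← hkerπ, hudef, map_zpow]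
          have he : (π g) ^ (α * ((p ^ r : ℕ) : ℤ)) = ((π g) ^ ((p ^ r : ℕ) : ℤ)) ^ α := by
            rw [← zpow_mul, mul_comm]
          rw [he, zpow_natCast, ← hordπg, pow_orderOf_eq_one, one_zpow]
        have hπw : π w = π g := by
          have h3 : π u * π w = π g := by rw [← map_mul, huw]
          rw [(hkerπ u).mpr huA, one_mul] at h3
          exact h3
        have hordw : orderOf w = p ^ r := by
          apply Nat.dvd_antisymm (orderOf_dvd_of_pow_eq_one hw1)
          rw [← hordπg, ← hπw]
          apply orderOf_dvd_of_pow_eq_one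
          rw [← map_pow, pow_orderOf_eq_one, map_one]
        -- Sylow conjugation
        have hQ : IsPGroup p (Subgroup.zpowers w) :=
          IsPGroup.of_card (by rw [Nat.card_zpowers, hordw])
        obtain ⟨P', hP'⟩ := hQ.exists_le_sylow
        obtain ⟨x, hx⟩ := MulAction.exists_smul_eq G P' P
        have hwP' : w ∈ (P' : Subgroup G) := hP' (Subgroup.mem_zpowers w)
        have hh₁P : x * w * x⁻¹ ∈ (P : Subgroup G) := by
          have h4 := Subgroup.smul_mem_pointwise_smul w (MulAut.conj x) (P' : Subgroup G) hwP'
          rw [← Sylow.pointwise_smul_def, ← Sylow.smul_def, hx] at h4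
          simpa [MulAut.smul_def, MulAut.conj_apply] using h4
        have hordh₁ : orderOf (x * w * x⁻¹) = p ^ r := by
          have h5 := orderOf_injective (MulAut.conj x).toMonoidHom (MulAut.conj x).injective w
          rw [show (MulAut.conj x).toMonoidHom w = x * w * x⁻¹ from rfl] at h5
          rw [h5, hordw]
        have hzh₁ : Subgroup.zpowers (x * w * x⁻¹) = (P : Subgroup G) :=
          subgroup_eq_of_le_of_card_le (Subgroup.zpowers_le.mpr hh₁P)
            (by rw [Nat.card_zpowers, hordh₁, hcardP])
        have hu1 : u = 1 := by
          have huA' : x * u * x⁻¹ ∈ A := hAn.conj_mem u huA x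
          have hcuw : Commute u w := (Commute.refl g).zpow_zpow _ _
          have hcu' : Commute (x * u * x⁻¹) (x * w * x⁻¹) := by
            have h5 := hcuw.map (MulAut.conj x).toMonoidHom
            simpa [MulAut.conj_apply] using h5
          have hC : ∀ q ∈ (P : Subgroup G), q * (x * u * x⁻¹) = (x * u * x⁻¹) * q := by
            intro q hq
            obtain ⟨j, rfl⟩ := Subgroup.mem_zpowers_iff.mp (hzh₁ ▸ hq)
            exact ((hcu'.symm).zpow_left j).eq
          have h6 : x * u * x⁻¹ = 1 := hZbot' _ huA' hC
          have h7 : u = x⁻¹ * (x * u * x⁻¹) * x := by group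
          rw [h7, h6]
          group
        have hgw : g = w := by rw [← huw, hu1, one_mul]
        have hordg : orderOf g = p ^ r := by rw [hgw]; exact hordw
        have hh₁g : x * g * x⁻¹ ∈ (P : Subgroup G) := by rw [hgw]; exact hh₁P
        have hzg : Subgroup.zpowers (x * g * x⁻¹) = (P : Subgroup G) := by rw [hgw]; exact hzh₁
        have hSP : ∀ y : G, y⁻¹ * g * y ∈ (P : Subgroup G) ↔ x * y ∈ (P : Subgroup G) := by
          intro y
          constructor
          · intro h
            have hord3 : orderOf (y⁻¹ * g * y) = p ^ r := by
              have h5 := orderOf_injective (MulAut.conj y⁻¹).toMonoidHom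
                (MulAut.conj y⁻¹).injective g
              rw [show (MulAut.conj y⁻¹).toMonoidHom g = y⁻¹ * g * y from by
                simp [MulAut.conj_apply]] at h5
              rw [h5, hordg]
            have hz3 : Subgroup.zpowers (y⁻¹ * g * y) = (P : Subgroup G) :=
              subgroup_eq_of_le_of_card_le (Subgroup.zpowers_le.mpr h)
                (by rw [Nat.card_zpowers, hord3, hcardP])
            have hbase : (x * y) * (y⁻¹ * g * y) * (x * y)⁻¹ = x * g * x⁻¹ := by group
            have hconj : ∀ j : ℤ, (x * y) * (y⁻¹ * g * y) ^ j * (x * y)⁻¹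
                = (x * g * x⁻¹) ^ j := by
              intro j
              rw [← hbase, conj_zpow]
            apply hnormP
            rw [Subgroup.mem_normalizer_iff]
            intro q
            constructor
            · intro hq
              obtain ⟨j, rfl⟩ := Subgroup.mem_zpowers_iff.mp (hz3 ▸ hq)
              rw [hconj j]
              exact Subgroup.zpow_mem _ hh₁g j
            · intro hq
              obtain ⟨j, hj⟩ := Subgroup.mem_zpowers_iff.mp (hzg ▸ hq)
              rw [← hconj j] at hj
              have h10 : q = (y⁻¹ * g * y) ^ j := by
                have := congrArg (fun z => (x * y)⁻¹ * z * (x * y)) hj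
                simpa [mul_assoc] using this.symm
              rw [h10, ← hz3]
              exact Subgroup.zpow_mem _ (Subgroup.mem_zpowers _) j
          · intro h
            have he : y⁻¹ * g * y = (x * y)⁻¹ * (x * g * x⁻¹) * (x * y) := by group
            rw [he]
            exact Subgroup.mul_mem _ (Subgroup.mul_mem _ (Subgroup.inv_mem _ h) hh₁g) h
        have hcardS : Nat.card {y : G // y⁻¹ * g * y ∈ (P : Subgroup G)}
            = Nat.card (P : Subgroup G) := by
          rw [Nat.card_congr (Equiv.subtypeEquivRight hSP)]
          apply Nat.card_congr
          exact ⟨fun y => ⟨x * y.1, y.2⟩, fun q => ⟨x⁻¹ * q.1, by simpa using q.2⟩,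
            fun y => by ext; simp, fun q => by ext; simp⟩
        have hPcast : ((Nat.card (P : Subgroup G) : ℤ)) ≠ 0 := by
          rw [hcardP]
          exact_mod_cast hprpos.ne'
        have hindP : indTrivChar (P : Subgroup G) g = 1 := by
          have e1 := indTrivChar_mul_card (P : Subgroup G) g
          rw [hcardS] at e1
          have h11 : indTrivChar (P : Subgroup G) g * (Nat.card (P : Subgroup G) : ℤ)
              = 1 * (Nat.card (P : Subgroup G) : ℤ) := by rw [e1, one_mul]
          exact mul_right_cancel₀ hPcast h11
        have hindP1 : indTrivChar P₁ g = 0 := by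
          have e2 := indTrivChar_mul_card P₁ g
          have hempty : IsEmpty {y : G // y⁻¹ * g * y ∈ P₁} := by
            constructor
            rintro ⟨y, hy⟩
            apply hgN
            have h10 : y⁻¹ * g * y ∈ N := hP1N hy
            have h11 := hNn.conj_mem _ h10 y
            rw [show y * (y⁻¹ * g * y) * y⁻¹ = g from by group] at h11
            exact h11
          have e3 : ((Nat.card {x : G // x⁻¹ * g * x ∈ P₁} : ℕ) : ℤ) = 0 := by
            rw [@Nat.card_of_isEmpty _ hempty, Nat.cast_zero]
          rw [e3] at e2
          have hne : ((Nat.card P₁ : ℤ)) ≠ 0 := by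
            rw [hcardP1]
            exact_mod_cast (Nat.pow_pos hp.pos).ne'
          exact (mul_eq_zero.mp e2).resolve_right hne
        rw [hNval, if_neg hgN, hindP, hindP1]
        ring
  · -- Z nontrivial: G is cyclic
    left
    haveI hcyc : IsCyclic (G ⧸ Z) := hquot Z hZbot
    have hGcomm := commutative_of_cyclic_center_quotient (QuotientGroup.mk' Z)
      (by rw [QuotientGroup.ker_mk']; exact hZc)
    have horda : orderOf a = m := by
      rw [← Nat.card_zpowers, ← hAz, hcardA]
    have hcop : Nat.Coprime (orderOf a) (orderOf s) := by
      rw [horda, hords]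
      exact Nat.Coprime.pow_right r ((Nat.Prime.coprime_iff_not_dvd hp).mpr hpm).symm
    have hcomm' : Commute a s := hGcomm a s
    have hord : orderOf (a * s) = Nat.card G := by
      rw [hcomm'.orderOf_mul_eq_mul_orderOf_of_coprime hcop, horda, hords, hcardG]
    exact isCyclic_of_orderOf_eq_card _ hord

end B2

section Main
universe u

theorem main_aux : ∀ (n : ℕ) (G : Type u) [Group G] [Finite G], Nat.card G = n →
    ∀ (p : ℕ), p.Prime → IsPQuasiElementary p G → ¬ IsCyclic G →
    ∃ c : Subgroup G →₀ ℤ, (∀ H ∈ c.support, H ≠ ⊤) ∧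
      ∀ g : G, (c.sum fun H n => n * indTrivChar H g) = (p : ℤ) := by
  intro n
  induction n using Nat.strong_induction_on with
  | _ n ih =>
    intro G _ _ hn p hp hqe hnc
    classical
    haveI hFp := Fact.mk hp
    by_cases hcase : ∀ (K : Subgroup G) [K.Normal], K ≠ ⊥ → IsCyclic (G ⧸ K)
    swap
    · -- there is a noncyclic proper quotient: induct
      rw [not_forall] at hcase
      obtain ⟨K, hK⟩ := hcase
      rw [not_forall] at hK
      obtain ⟨hKn, hK2⟩ := hK
      haveI := hKn
      obtain ⟨hKne, hKnc⟩ := _root_.not_imp.mp hK2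
      have hKcard : 1 < Nat.card K := (Subgroup.one_lt_card_iff_ne_bot K).mpr hKne
      have hlt : Nat.card (G ⧸ K) < n := by
        rw [← hn]
        have h1 := Subgroup.card_eq_card_quotient_mul_card_subgroup K
        have h2 : 0 < Nat.card (G ⧸ K) := Nat.card_pos
        calc Nat.card (G ⧸ K) < Nat.card (G ⧸ K) * Nat.card K :=
              lt_mul_of_one_lt_right h2 hKcard
          _ = Nat.card G := h1.symm
      exact relation_comap (QuotientGroup.mk' K) (QuotientGroup.mk'_surjective K) p
        (ih _ hlt (G ⧸ K) rfl p hp (isPQE_quotient p hp hqe K) hKnc)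
    · -- every nontrivial normal subgroup has cyclic quotient
      obtain ⟨C, hCn, hCc, k, hCi⟩ := hqe
      obtain ⟨cg, hcg⟩ := IsCyclic.exists_generator (α := C)
      set c₀ := (cg : G) with hc0def
      have hzc : Nat.card (Subgroup.zpowers c₀) = Nat.card C := by
        rw [Nat.card_zpowers, hc0def, Subgroup.orderOf_coe,
          orderOf_eq_card_of_forall_mem_zpowers hcg]
      have hCz : C = Subgroup.zpowers c₀ :=
        (subgroup_eq_of_le_of_card_le (Subgroup.zpowers_le.mpr cg.2) hzc.ge).symm
      have hordc : orderOf c₀ = Nat.card C := by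
        rw [← Nat.card_zpowers, hzc]
      have hordc0 : orderOf c₀ ≠ 0 := (orderOf_pos c₀).ne'
      set v := (orderOf c₀).factorization p with hvdef
      set m := orderOf c₀ / p ^ v with hmdef
      have hpm : ¬ p ∣ m := Nat.not_dvd_ordCompl hp hordc0
      have hvm : p ^ v * m = orderOf c₀ := Nat.ordProj_mul_ordCompl_eq_self _ p
      have hm0 : 0 < m := Nat.ordCompl_pos p hordc0
      set a := c₀ ^ (p ^ v) with hadef
      set A := Subgroup.zpowers a with hAdef
      have horda : orderOf a = m := by
        rw [hadef, orderOf_pow]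
        have hgcd : Nat.gcd (orderOf c₀) (p ^ v) = p ^ v := by
          rw [Nat.gcd_comm]
          exact Nat.gcd_eq_left (Nat.ordProj_dvd _ p)
        rw [hgcd, hmdef]
      have hcardA : Nat.card A = m := by rw [hAdef, Nat.card_zpowers, horda]
      have haC : a ∈ C := by
        rw [hadef]
        exact C.pow_mem cg.2 _
      -- elements of C killed by m lie in A
      have hCm : ∀ x ∈ C, x ^ m = 1 → x ∈ A := by
        intro x hxC hxm
        obtain ⟨j, rfl⟩ := Subgroup.mem_zpowers_iff.mp (hCz ▸ hxC)
        rw [zpow_helper2] at hxm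
        have hdvd : ((orderOf c₀ : ℕ) : ℤ) ∣ j * ((m : ℕ) : ℤ) :=
          orderOf_dvd_iff_zpow_eq_one.mpr hxm
        rw [← hvm] at hdvd
        push_cast at hdvd
        have hmne : ((m : ℕ) : ℤ) ≠ 0 := by exact_mod_cast hm0.ne'
        have hdvd2 : ((p : ℤ)) ^ v ∣ j := (mul_dvd_mul_iff_right hmne).mp (by
          push_cast
          exact hdvd)
        obtain ⟨j', hj'⟩ := hdvd2
        refine Subgroup.mem_zpowers_iff.mpr ⟨j', ?_⟩
        rw [hadef, zpow_helper1]
        congr 1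
        push_cast [hj']
        ring
      have hAn : A.Normal := by
        constructor
        intro x hx g
        obtain ⟨j, rfl⟩ := Subgroup.mem_zpowers_iff.mp (hAdef ▸ hx)
        rw [← conj_zpow]
        apply Subgroup.zpow_mem
        apply hCm
        · exact hCn.conj_mem a haC g
        · rw [conj_pow, ← horda, pow_orderOf_eq_one]
          group
      haveI hAnI := hAn
      have hAidx : Nat.card (G ⧸ A) = p ^ (v + k) := by
        have h1 := Subgroup.card_mul_index A
        have h2 := Subgroup.card_mul_index C
        rw [hcardA, Subgroup.index_eq_card] at h1
        rw [hordc] at hvm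
        rw [← hvm, hCi] at h2
        have h3 : m * Nat.card (G ⧸ A) = m * (p ^ (v + k)) := by
          rw [h1, ← h2, pow_add]
          ring
        exact Nat.eq_of_mul_eq_mul_left hm0 h3
      by_cases hm : 1 < m
      · -- mixed case : use B2
        have hAne : A ≠ ⊥ := by
          intro h
          rw [h, Subgroup.card_bot] at hcardA
          omega
        have hr1 : 1 ≤ v + k := by
          by_contra h
          have hvk : v + k = 0 := by omega
          rw [hvk, pow_zero] at hAidx
          have hAt : A = ⊤ := by
            rw [← Subgroup.index_eq_one, Subgroup.index_eq_card, hAidx]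
          apply hnc
          refine ⟨⟨a, fun x => ?_⟩⟩
          have hx : x ∈ A := by rw [hAt]; exact Subgroup.mem_top x
          rw [hAdef] at hx
          exact hx
        haveI hGbarCyc : IsCyclic (G ⧸ A) := hcase A hAne
        rcases relation_B2 p hp A hAn a hAdef m hm hpm hcardA (v + k) hr1 hAidx
          hGbarCyc hcase with hcyc | hrel
        · exact absurd hcyc hnc
        · exact hrel
      · -- m = 1 : G is a p-group
        have hm1 : m = 1 := by omega
        have hcardGp : Nat.card G = p ^ (v + k) := by
          have h1 := Subgroup.card_eq_card_quotient_mul_card_subgroup A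
          rw [hAidx, hcardA, hm1, mul_one] at h1
          exact h1
        have hpG : IsPGroup p G := IsPGroup.of_card hcardGp
        have hvk1 : 1 ≤ v + k := by
          by_contra h
          have hvk : v + k = 0 := by omega
          rw [hvk, pow_zero] at hcardGp
          haveI : Subsingleton G := Finite.card_le_one_iff_subsingleton.mp (by omega)
          exact hnc isCyclic_of_subsingleton
        haveI hntG : Nontrivial G := by
          rw [← Finite.one_lt_card_iff_nontrivial, hcardGp]
          calc 1 < p := hp.one_lt
            _ ≤ p ^ (v + k) := Nat.le_self_pow (by omega) p
        -- a central element of order p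
        haveI hcn := hpG.center_nontrivial
        obtain ⟨y, hy1⟩ := exists_ne (1 : Subgroup.center G)
        have hyne : (y : G) ≠ 1 := fun h => hy1 (Subtype.ext h)
        obtain ⟨j0, hj0⟩ := hpG (y : G)
        have hordy : ∃ i, 1 ≤ i ∧ orderOf (y : G) = p ^ i := by
          obtain ⟨i, hile, hi⟩ := (Nat.dvd_prime_pow hp).mp (orderOf_dvd_of_pow_eq_one hj0)
          refine ⟨i, ?_, hi⟩
          by_contra h
          have : i = 0 := by omega
          rw [this, pow_zero, orderOf_eq_one_iff] at hi
          exact hyne hi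
        obtain ⟨i, hi1, hordy⟩ := hordy
        have hppi : p * p ^ (i - 1) = p ^ i := by
          rw [← pow_succ', Nat.sub_add_cancel hi1]
        set z := (y : G) ^ (p ^ (i - 1)) with hzdef
        have hordz : orderOf z = p := by
          rw [hzdef, orderOf_pow, hordy]
          have hgcd : Nat.gcd (p ^ i) (p ^ (i - 1)) = p ^ (i - 1) := by
            rw [Nat.gcd_comm]
            exact Nat.gcd_eq_left (pow_dvd_pow p (by omega))
          rw [hgcd, ← hppi, Nat.mul_div_cancel _ (Nat.pow_pos hp.pos)]
        have hzc : z ∈ Subgroup.center G := by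
          rw [hzdef]
          exact (Subgroup.center G).pow_mem y.2 _
        have hzne : z ≠ 1 := by
          intro h
          rw [h, orderOf_one] at hordz
          have := hp.one_lt
          omega
        -- a subgroup of the center is normal, quotient cyclic, so G is commutative
        have hcommG : ∀ x y : G, x * y = y * x := by
          have hK1n : (Subgroup.zpowers z).Normal := by
            constructor
            intro x hx g
            obtain ⟨j, rfl⟩ := Subgroup.mem_zpowers_iff.mp hx
            have hzc2 : z ^ j ∈ Subgroup.center G := (Subgroup.center G).zpow_mem hzc j
            rw [show g * z ^ j * g⁻¹ = z ^ j from by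
              rw [Subgroup.mem_center_iff.mp hzc2 g, mul_assoc, mul_inv_cancel, mul_one]]
            exact hx
          haveI := hK1n
          have hK1ne : Subgroup.zpowers z ≠ ⊥ := by
            intro h
            exact hzne (Subgroup.mem_bot.mp (h ▸ Subgroup.mem_zpowers z))
          haveI hq1 : IsCyclic (G ⧸ Subgroup.zpowers z) := hcase (Subgroup.zpowers z) hK1ne
          exact commutative_of_cyclic_center_quotient (QuotientGroup.mk' (Subgroup.zpowers z))
            (by rw [QuotientGroup.ker_mk']
                exact Subgroup.zpowers_le.mpr hzc)
        have hnormal : ∀ H : Subgroup G, H.Normal := by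
          intro H
          constructor
          intro x hx g
          have he : g * x * g⁻¹ = x := by
            rw [hcommG g x, mul_assoc, mul_inv_cancel, mul_one]
          rw [he]
          exact hx
        by_cases hexp : ∀ x : G, x ^ p = 1
        · -- exponent p
          have horder : ∀ x : G, x ≠ 1 → orderOf x = p := by
            intro x hx
            have h1 : orderOf x ∣ p := orderOf_dvd_of_pow_eq_one (hexp x)
            rcases (Nat.dvd_prime hp).mp h1 with h | h
            · exact absurd (orderOf_eq_one_iff.mp h) hx
            · exact h
          by_cases hsq : Nat.card G = p ^ 2
          · exact relation_of_card_p_sq p hp hcommG hsq horder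
          · -- card ≥ p^3 : contradiction with every quotient cyclic
            exfalso
            have he2 : 2 ≤ v + k := by
              by_contra h
              have : v + k = 1 := by omega
              rw [this, pow_one] at hcardGp
              exact hnc (isCyclic_of_prime_card hcardGp)
            have he3 : 3 ≤ v + k := by
              by_contra h
              have : v + k = 2 := by omega
              rw [this] at hcardGp
              exact hsq hcardGp
            obtain ⟨x, hx1⟩ := exists_ne (1 : G)
            have hKx : Subgroup.zpowers x ≠ ⊥ := by
              intro h
              exact hx1 (Subgroup.mem_bot.mp (h ▸ Subgroup.mem_zpowers x))
            haveI := hnormal (Subgroup.zpowers x)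
            haveI hqc : IsCyclic (G ⧸ Subgroup.zpowers x) := hcase (Subgroup.zpowers x) hKx
            obtain ⟨gq, hgq⟩ := IsCyclic.exists_generator (α := G ⧸ Subgroup.zpowers x)
            have hgqp : gq ^ p = 1 := by
              obtain ⟨g0, rfl⟩ := QuotientGroup.mk'_surjective _ gq
              rw [← map_pow, hexp g0, map_one]
            have hcardq : Nat.card (G ⧸ Subgroup.zpowers x) ∣ p := by
              rw [← orderOf_eq_card_of_forall_mem_zpowers hgq]
              exact orderOf_dvd_of_pow_eq_one hgqp
            have hcardKx : Nat.card (Subgroup.zpowers x) = p := by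
              rw [Nat.card_zpowers, horder x hx1]
            have hcardq2 : Nat.card (G ⧸ Subgroup.zpowers x) * p = p ^ (v + k) := by
              have h1 := Subgroup.card_eq_card_quotient_mul_card_subgroup (Subgroup.zpowers x)
              rw [hcardKx, hcardGp] at h1
              exact h1.symm
            have hle : Nat.card (G ⧸ Subgroup.zpowers x) ≤ p :=
              Nat.le_of_dvd hp.pos hcardq
            have hge : p ^ 2 ≤ Nat.card (G ⧸ Subgroup.zpowers x) := by
              have h2 : p ^ 2 * p ≤ Nat.card (G ⧸ Subgroup.zpowers x) * p := by
                rw [hcardq2, ← pow_succ]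
                exact Nat.pow_le_pow_right hp.pos (by omega)
              exact Nat.le_of_mul_le_mul_right h2 hp.pos
            have : p < p ^ 2 := by nlinarith [hp.two_le]
            omega
        · -- not exponent p : contradiction
          exfalso
          push_neg at hexp
          obtain ⟨h, hh⟩ := hexp
          obtain ⟨j1, hj1⟩ := hpG (h ^ p)
          have hordhp : ∃ i, 1 ≤ i ∧ orderOf (h ^ p) = p ^ i := by
            obtain ⟨i, hile, hi⟩ := (Nat.dvd_prime_pow hp).mp (orderOf_dvd_of_pow_eq_one hj1)
            refine ⟨i, ?_, hi⟩
            by_contra hcon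
            have : i = 0 := by omega
            rw [this, pow_zero, orderOf_eq_one_iff] at hi
            exact hh hi
          obtain ⟨i, hi1, hordhp⟩ := hordhp
          set w := (h ^ p) ^ (p ^ (i - 1)) with hwdef
          have hordw : orderOf w = p := by
            rw [hwdef, orderOf_pow, hordhp]
            have hgcd : Nat.gcd (p ^ i) (p ^ (i - 1)) = p ^ (i - 1) := by
              rw [Nat.gcd_comm]
              exact Nat.gcd_eq_left (pow_dvd_pow p (by omega))
            rw [hgcd, ← (show p * p ^ (i-1) = p ^ i from by
              rw [← pow_succ', Nat.sub_add_cancel hi1]),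
              Nat.mul_div_cancel _ (Nat.pow_pos hp.pos)]
          have hwp1 : w ^ p = 1 := by
            rw [← hordw, pow_orderOf_eq_one]
          have hwne : w ≠ 1 := by
            intro hcon
            rw [hcon, orderOf_one] at hordw
            have := hp.one_lt
            omega
          have hwpow : w = (h ^ (p ^ (i - 1))) ^ p := by
            rw [hwdef, ← pow_mul, ← pow_mul, mul_comm]
          set h' := h ^ (p ^ (i - 1)) with hh'def
          haveI := hnormal (Subgroup.zpowers w)
          have hKw : Subgroup.zpowers w ≠ ⊥ := by
            intro hcon
            exact hwne (Subgroup.mem_bot.mp (hcon ▸ Subgroup.mem_zpowers w))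
          haveI hqw : IsCyclic (G ⧸ Subgroup.zpowers w) := hcase (Subgroup.zpowers w) hKw
          obtain ⟨gq, hgq⟩ := IsCyclic.exists_generator (α := G ⧸ Subgroup.zpowers w)
          obtain ⟨g0, rfl⟩ := QuotientGroup.mk'_surjective _ gq
          set nQ := Nat.card (G ⧸ Subgroup.zpowers w) with hnQdef
          have hnQ0 : 0 < nQ := Nat.card_pos
          have hordgq : orderOf (QuotientGroup.mk' (Subgroup.zpowers w) g0) = nQ :=
            orderOf_eq_card_of_forall_mem_zpowers hgq
          have hcardKw : Nat.card (Subgroup.zpowers w) = p := by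
            rw [Nat.card_zpowers, hordw]
          have hcardGQ : Nat.card G = nQ * p := by
            have h1 := Subgroup.card_eq_card_quotient_mul_card_subgroup (Subgroup.zpowers w)
            rw [hcardKw] at h1
            exact h1
          apply hnc
          by_cases hg0 : g0 ^ nQ = 1
          · -- G = <g0>
            have hwg0 : w ∈ Subgroup.zpowers g0 := by
              obtain ⟨e0, he0⟩ := Subgroup.mem_zpowers_iff.mp
                (hgq (QuotientGroup.mk' (Subgroup.zpowers w) h'))
              have he1 : (QuotientGroup.mk' (Subgroup.zpowers w) (g0 ^ e0)) =
                  QuotientGroup.mk' (Subgroup.zpowers w) h' := by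
                rw [map_zpow, he0]
              have he2 : (g0 ^ e0)⁻¹ * h' ∈ Subgroup.zpowers w := by
                rw [← QuotientGroup.eq]
                exact he1
              obtain ⟨l, hl⟩ := Subgroup.mem_zpowers_iff.mp he2
              have hh'eq : h' = g0 ^ e0 * w ^ l := by
                rw [hl]
                group
              have hcomm2 : Commute (g0 ^ e0) (w ^ l) := (hcommG _ _)
              have hw2 : w = (g0 ^ e0) ^ p * (w ^ l) ^ p := by
                rw [← hcomm2.mul_pow, ← hh'eq, hwpow]
              have hwl : (w ^ l) ^ p = 1 := by
                rw [zpow_helper2, mul_comm, zpow_mul, zpow_natCast, hwp1, one_zpow]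
              rw [hwl, mul_one, zpow_helper2] at hw2
              exact Subgroup.mem_zpowers_iff.mpr ⟨e0 * p, hw2.symm⟩
            refine ⟨⟨g0, fun x => ?_⟩⟩
            obtain ⟨e1, he1⟩ := Subgroup.mem_zpowers_iff.mp
              (hgq (QuotientGroup.mk' (Subgroup.zpowers w) x))
            have he2 : (g0 ^ e1)⁻¹ * x ∈ Subgroup.zpowers w := by
              rw [← QuotientGroup.eq]
              rw [← map_zpow] at he1
              exact he1
            have he3 : (g0 ^ e1)⁻¹ * x ∈ Subgroup.zpowers g0 :=
              Subgroup.zpowers_le.mpr hwg0 he2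
            have he4 : x = g0 ^ e1 * ((g0 ^ e1)⁻¹ * x) := by group
            rw [he4]
            exact Subgroup.mul_mem _ (Subgroup.zpow_mem _ (Subgroup.mem_zpowers g0) e1) he3
          · -- orderOf g0 = card G
            have hdvd : nQ ∣ orderOf g0 := by
              rw [← hordgq]
              apply orderOf_dvd_of_pow_eq_one
              rw [← map_pow, pow_orderOf_eq_one, map_one]
            obtain ⟨d, hd⟩ := hdvd
            have hdp : d ∣ p := by
              have h1 : orderOf g0 ∣ nQ * p := by
                rw [← hcardGQ]
                exact orderOf_dvd_natCard g0
              rw [hd] at h1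
              exact (Nat.mul_dvd_mul_iff_left hnQ0).mp h1
            have hd1 : d ≠ 1 := by
              intro hcon
              rw [hcon, mul_one] at hd
              exact hg0 (by rw [← hd]; exact pow_orderOf_eq_one g0)
            have hdp2 : d = p := ((Nat.dvd_prime hp).mp hdp).resolve_left hd1
            apply isCyclic_of_orderOf_eq_card g0
            rw [hd, hdp2, hcardGQ]

theorem main_final (G : Type u) [Group G] [Finite G]
    (p : ℕ) (hp : p.Prime) (hqe : IsPQuasiElementary p G) (hnc : ¬ IsCyclic G) :
    ∃ c : Subgroup G →₀ ℤ,
      (∀ H ∈ c.support, H ≠ ⊤) ∧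
      ∀ g : G, (c.sum fun H n => n * indTrivChar H g) = (p : ℤ) :=
  main_aux (Nat.card G) G rfl p hp hqe hnc

end Main

/-- If `G` is `p`-quasi-elementary and not cyclic, then `p · 1_G` is a
`ℤ`-linear combination of characters induced from trivial characters of proper
subgroups. -/
theorem p_mul_triv_is_combination_of_proper_inductions (G : Type*) [Group G] [Finite G]
    (p : ℕ) (hp : p.Prime) (hqe : IsPQuasiElementary p G) (hnc : ¬ IsCyclic G) :
    ∃ c : Subgroup G →₀ ℤ,
      (∀ H ∈ c.support, H ≠ ⊤) ∧
      ∀ g : G, (c.sum fun H n => n * indTrivChar H g) = (p : ℤ) := by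
  exact main_aux (Nat.card G) G rfl p hp hqe hnc
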